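/- The quadratic form Q(x,y) = x² − (3 + 2√2)y² on ℝ² is real, indefinite, nondegenerate, is not a scalar multiple of a form with integer coefficients, and Q(ℤ²) is not dense in ℝ. -/

import Mathlib

set_option maxHeartbeats 1000000 in
lemma key_no_val (a b : ℤ) :
    ¬ ((1:ℝ)/4 < (a:ℝ)^2 - (3 + 2*Real.sqrt 2) * (b:ℝ)^2 ∧
       (a:ℝ)^2 - (3 + 2*Real.sqrt 2) * (b:ℝ)^2 < 1/2) := by
  rintro ⟨h1, h2⟩
  set s : ℝ := Real.sqrt 2 with hsdef
  have hs : s^2 = 2 := Real.sq_sqrt (by norm_num)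
  have hs0 : 0 < s := Real.sqrt_pos.mpr (by norm_num)
  clear_value s
  have hs1 : 1.41 < s := by nlinarith
  have hs2 : s < 1.42 := by nlinarith
  set A : ℤ := |a| with hAdef
  set B : ℤ := |b| with hBdef
  set x : ℝ := (A : ℝ) with hxdef
  set y : ℝ := (B : ℝ) with hydef
  clear_value x y
  have hx0 : 0 ≤ x := by rw [hxdef, hAdef]; push_cast; exact abs_nonneg _
  have hy0 : 0 ≤ y := by rw [hydef, hBdef]; push_cast; exact abs_nonneg _
  have hxa : x^2 = (a:ℝ)^2 := by rw [hxdef, hAdef]; push_cast; exact sq_abs _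
  have hyb : y^2 = (b:ℝ)^2 := by rw [hydef, hBdef]; push_cast; exact sq_abs _
  rw [← hxa, ← hyb] at h1 h2
  rcases eq_or_ne b 0 with hb | hb
  · have hy' : y = 0 := by rw [hydef, hBdef, hb]; simp
    rw [hy'] at h1 h2
    rcases eq_or_ne a 0 with ha | ha
    · rw [hxdef, hAdef, ha] at h1; norm_num at h1
    · have hx1 : (1:ℝ) ≤ x := by
        rw [hxdef, hAdef]
        exact_mod_cast Int.one_le_abs ha
      nlinarith
  · have hy1 : (1:ℝ) ≤ y := by
      rw [hydef, hBdef]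
      exact_mod_cast Int.one_le_abs hb
    have hsq : ((1+s)*y)^2 < x^2 := by nlinarith [hs]
    have hxy : (1+s)*y < x :=
      lt_of_pow_lt_pow_left₀ 2 hx0 hsq
    set f1 : ℝ := x - (1+s)*y with hf1def
    set f2 : ℝ := x - (1-s)*y with hf2def
    clear_value f1 f2
    have hf1pos : 0 < f1 := by rw [hf1def]; linarith
    have hf2pos : 0 < f2 := by rw [hf2def]; nlinarith
    have e1 : f1 * (x + (1+s)*y) = x^2 - (3+2*s)*y^2 := by
      rw [hf1def]; linear_combination (-(y^2)) * hs
    have hf1Q : f1 * (x + (1+s)*y) < 1/2 := by rw [e1]; exact h2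
    have hxplus : (4.8:ℝ) < x + (1+s)*y := by nlinarith
    have hf1b : f1 < 1/8 := by
      nlinarith [mul_lt_mul_of_pos_left hxplus hf1pos]
    have hf2b : f2 < (2*s + 1/8)*y := by
      have e2 : f2 = f1 + 2*s*y := by rw [hf1def, hf2def]; ring
      rw [e2]; nlinarith
    have hK : ((A^2 - 2*(A*B) - B^2 : ℤ) : ℝ) = f1 * f2 := by
      push_cast
      rw [← hxdef, ← hydef, hf1def, hf2def]
      linear_combination (y^2) * hs
    have hKpos : (0:ℤ) < A^2 - 2*(A*B) - B^2 := by
      have : (0:ℝ) < ((A^2 - 2*(A*B) - B^2 : ℤ) : ℝ) := by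
        rw [hK]; exact mul_pos hf1pos hf2pos
      exact_mod_cast this
    have hK1 : (1:ℝ) ≤ f1 * f2 := by
      rw [← hK]; exact_mod_cast hKpos
    have h5 : f1 * f2 * (x + (1+s)*y) < (2*s + 1/8)*y * (1/2) := by
      calc f1 * f2 * (x + (1+s)*y) = f2 * (f1 * (x + (1+s)*y)) := by ring
        _ < f2 * (1/2) := mul_lt_mul_of_pos_left hf1Q hf2pos
        _ ≤ (2*s + 1/8)*y * (1/2) := by linarith
    have hxp0 : (0:ℝ) < x + (1+s)*y := by linarith
    have h6 : 2*((1+s)*y) ≤ f1 * f2 * (x + (1+s)*y) := by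
      nlinarith [mul_le_mul_of_nonneg_right hK1 (le_of_lt hxp0)]
    nlinarith

theorem stmt7 (Q : ℝ → ℝ → ℝ)
    (hQ : ∀ x y, Q x y = x^2 - (3 + 2 * Real.sqrt 2) * y^2) :
    ((∃ x y : ℝ, 0 < Q x y) ∧ (∃ x y : ℝ, Q x y < 0)) ∧
    (¬ ∃ v : ℝ × ℝ, v ≠ 0 ∧
        ∀ w : ℝ × ℝ, Q (w.1 + v.1) (w.2 + v.2) = Q (w.1 - v.1) (w.2 - v.2)) ∧
    (¬ ∃ (k : ℝ) (m p r : ℤ), k ≠ 0 ∧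
        ∀ x y : ℝ, k * Q x y = (m : ℝ) * x^2 + (p : ℝ) * x * y + (r : ℝ) * y^2) ∧
    ¬ Dense (Set.range fun v : ℤ × ℤ => Q (v.1 : ℝ) (v.2 : ℝ)) := by
  have hs0 : 0 < Real.sqrt 2 := Real.sqrt_pos.mpr (by norm_num)
  refine ⟨⟨⟨1, 0, ?_⟩, ⟨0, 1, ?_⟩⟩, ?_, ?_, ?_⟩
  · rw [hQ]; norm_num
  · rw [hQ]; nlinarith
  · rintro ⟨v, hv, h⟩
    have h1 := h (1, 0)
    have h2 := h (0, 1)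
    simp only [hQ] at h1 h2
    have hv1 : v.1 = 0 := by linear_combination (1/4) * h1
    have hv2 : (3 + 2*Real.sqrt 2) * v.2 = 0 := by linear_combination (-(1/4)) * h2
    have hv2' : v.2 = 0 :=
      (mul_eq_zero.mp hv2).resolve_left (by positivity)
    exact hv (Prod.ext hv1 hv2')
  · rintro ⟨k, m, p, r, hk, h⟩
    have h10 := h 1 0
    have h01 := h 0 1
    simp only [hQ] at h10 h01
    have hkm : k = (m:ℝ) := by linear_combination h10
    have hm0 : m ≠ 0 := by
      rintro rfl; simp at hkm; exact hk hkm
    have hr : ((2*m : ℤ) : ℝ) * Real.sqrt 2 = ((-r - 3*m : ℤ) : ℝ) := by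
      push_cast
      linear_combination (-1) * h01 - (3 + 2*Real.sqrt 2) * hkm
    have hirr : Irrational (((2*m : ℤ) : ℝ) * Real.sqrt 2) :=
      irrational_sqrt_two.intCast_mul (by omega)
    rw [hr] at hirr
    exact (Int.not_irrational _) hirr
  · intro hd
    obtain ⟨q, hq, hq1, hq2⟩ := hd.exists_between (show (1:ℝ)/4 < 1/2 by norm_num)
    obtain ⟨⟨a, b⟩, rfl⟩ := hq
    simp only [hQ] at hq1 hq2
    exact key_no_val a b ⟨hq1, hq2⟩
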